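/- Let Ω ⊂ ℝⁿ be open and u ∈ C¹(Ω;ℝ^h) with Φ : ℝ^h → ℝ continuous and nonnegative, and let φ(z) = d_Φ(p,z) for a fixed p ∈ ℝ^h. Then for a.e. x ∈ Ω, |∇(φ∘u)(x)| ≤ √(2Φ(u(x))) |∇u(x)|. -/

import Mathlib

open MeasureTheory

/-- The degenerate Riemannian distance induced by the conformal factor `√(2Φ)`. -/
noncomputable def dPhi {h : ℕ} (Φ : EuclideanSpace ℝ (Fin h) → ℝ)
    (a b : EuclideanSpace ℝ (Fin h)) : ℝ :=
  sInf { r : ℝ | ∃ γ : ℝ → EuclideanSpace ℝ (Fin h), ContDiff ℝ 1 γ ∧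
    γ 0 = a ∧ γ 1 = b ∧
    r = ∫ t in (0:ℝ)..1, Real.sqrt (2 * Φ (γ t)) * ‖deriv γ t‖ }

/-- The Frobenius norm of the Jacobian of `u` at `x`. -/
noncomputable def frobJac {n h : ℕ}
    (u : EuclideanSpace ℝ (Fin n) → EuclideanSpace ℝ (Fin h))
    (x : EuclideanSpace ℝ (Fin n)) : ℝ :=
  Real.sqrt (∑ i, ∑ j, (fderiv ℝ u x (EuclideanSpace.single j 1) i) ^ 2)

open Filter Set Topology Finset in
lemma opNorm_le_frob {n h : ℕ} (A : EuclideanSpace ℝ (Fin n) →L[ℝ] EuclideanSpace ℝ (Fin h)) :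
    ‖A‖ ≤ Real.sqrt (∑ i, ∑ j, (A (EuclideanSpace.single j 1) i) ^ 2) := by
  apply ContinuousLinearMap.opNorm_le_bound _ (Real.sqrt_nonneg _)
  intro v
  have hv : A v = ∑ j, v j • A (EuclideanSpace.single j 1) := by
    have hrepr : v = ∑ j, (v j) • EuclideanSpace.single j (1:ℝ) := by
      ext k
      rw [WithLp.ofLp_sum, Finset.sum_apply]
      simp only [PiLp.smul_apply, EuclideanSpace.single_apply, smul_eq_mul]
      simp [Finset.sum_ite_eq]
    conv_lhs => rw [hrepr, map_sum]
    simp [_root_.map_smul]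
  have hnorm : ‖A v‖ = Real.sqrt (∑ i, (A v i) ^ 2) := by
    rw [EuclideanSpace.norm_eq]
    congr 1
    apply Finset.sum_congr rfl
    intro i _
    rw [Real.norm_eq_abs, sq_abs]
  have hvnorm : ‖v‖ ^ 2 = ∑ j, (v j) ^ 2 := by
    rw [EuclideanSpace.norm_eq, Real.sq_sqrt (by positivity)]
    apply Finset.sum_congr rfl
    intro j _
    rw [Real.norm_eq_abs, sq_abs]
  rw [hnorm]
  have key : ∑ i, (A v i) ^ 2 ≤ (∑ i, ∑ j, (A (EuclideanSpace.single j 1) i) ^ 2) * ‖v‖ ^ 2 := by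
    rw [Finset.sum_mul]
    apply Finset.sum_le_sum
    intro i _
    have hAvi : A v i = ∑ j, v j * A (EuclideanSpace.single j 1) i := by
      rw [hv, WithLp.ofLp_sum, Finset.sum_apply]
      simp [PiLp.smul_apply]
    rw [hAvi, hvnorm]
    calc (∑ j, v j * A (EuclideanSpace.single j 1) i) ^ 2
        ≤ (∑ j, (v j) ^ 2) * ∑ j, (A (EuclideanSpace.single j 1) i) ^ 2 :=
          Finset.sum_mul_sq_le_sq_mul_sq _ _ _
      _ = (∑ j, (A (EuclideanSpace.single j 1) i) ^ 2) * ∑ j, (v j) ^ 2 := mul_comm _ _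
  calc Real.sqrt (∑ i, (A v i) ^ 2)
      ≤ Real.sqrt ((∑ i, ∑ j, (A (EuclideanSpace.single j 1) i) ^ 2) * ‖v‖ ^ 2) :=
        Real.sqrt_le_sqrt key
    _ = Real.sqrt (∑ i, ∑ j, (A (EuclideanSpace.single j 1) i) ^ 2) * ‖v‖ := by
        rw [Real.sqrt_mul (by positivity), Real.sqrt_sq (norm_nonneg _)]

section auxlemmas
open Filter Set Topology
variable {h : ℕ} {Φ : EuclideanSpace ℝ (Fin h) → ℝ}

lemma seg_contDiff (a b : EuclideanSpace ℝ (Fin h)) :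
    ContDiff ℝ 1 (fun t : ℝ => a + t • (b - a)) :=
  contDiff_const.add (contDiff_id.smul contDiff_const)

lemma seg_deriv (a b : EuclideanSpace ℝ (Fin h)) (t : ℝ) :
    deriv (fun t : ℝ => a + t • (b - a)) t = b - a := by
  have : HasDerivAt (fun t : ℝ => a + t • (b - a)) (b - a) t := by
    simpa using ((hasDerivAt_id t).smul_const (b - a)).const_add a
  exact this.deriv

lemma dPhi_set_nonempty (a b : EuclideanSpace ℝ (Fin h)) :
    Set.Nonempty { r : ℝ | ∃ γ : ℝ → EuclideanSpace ℝ (Fin h), ContDiff ℝ 1 γ ∧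
      γ 0 = a ∧ γ 1 = b ∧
      r = ∫ t in (0:ℝ)..1, Real.sqrt (2 * Φ (γ t)) * ‖deriv γ t‖ } :=
  ⟨_, fun t : ℝ => a + t • (b - a),
    contDiff_const.add (contDiff_id.smul contDiff_const), by simp, by simp, rfl⟩

lemma dPhi_set_lb (hΦ : ∀ z, 0 ≤ Φ z) (a b : EuclideanSpace ℝ (Fin h)) :
    ∀ r ∈ { r : ℝ | ∃ γ : ℝ → EuclideanSpace ℝ (Fin h), ContDiff ℝ 1 γ ∧
      γ 0 = a ∧ γ 1 = b ∧
      r = ∫ t in (0:ℝ)..1, Real.sqrt (2 * Φ (γ t)) * ‖deriv γ t‖ }, 0 ≤ r := by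
  rintro r ⟨γ, hγ, h0, h1, rfl⟩
  apply intervalIntegral.integral_nonneg (by norm_num)
  intro t _
  positivity

lemma dPhi_bddBelow (hΦ : ∀ z, 0 ≤ Φ z) (a b : EuclideanSpace ℝ (Fin h)) :
    BddBelow { r : ℝ | ∃ γ : ℝ → EuclideanSpace ℝ (Fin h), ContDiff ℝ 1 γ ∧
      γ 0 = a ∧ γ 1 = b ∧
      r = ∫ t in (0:ℝ)..1, Real.sqrt (2 * Φ (γ t)) * ‖deriv γ t‖ } :=
  ⟨0, dPhi_set_lb hΦ a b⟩

lemma glue_mono : Monotone expNegInvGlue := by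
  intro x y hxy
  rcases le_or_gt y 0 with hy | hy
  · rw [expNegInvGlue.zero_of_nonpos (hxy.trans hy), expNegInvGlue.zero_of_nonpos hy]
  rcases le_or_gt x 0 with hx | hx
  · rw [expNegInvGlue.zero_of_nonpos hx]; exact expNegInvGlue.nonneg y
  · unfold expNegInvGlue
    rw [if_neg (not_le.2 hx), if_neg (not_le.2 hy)]
    apply Real.exp_le_exp.2
    simp only [neg_le_neg_iff]
    exact inv_anti₀ hx hxy

lemma psi_mono : Monotone Real.smoothTransition := by
  intro x y hxy
  unfold Real.smoothTransition
  rw [div_le_div_iff₀ (Real.smoothTransition.pos_denom x) (Real.smoothTransition.pos_denom y)]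
  have h1 : expNegInvGlue x ≤ expNegInvGlue y := glue_mono hxy
  have h2 : expNegInvGlue (1 - y) ≤ expNegInvGlue (1 - x) := glue_mono (by linarith)
  nlinarith [expNegInvGlue.nonneg x, expNegInvGlue.nonneg y,
    expNegInvGlue.nonneg (1 - x), expNegInvGlue.nonneg (1 - y)]

lemma mono_deriv_nonneg' {ψ : ℝ → ℝ} {x : ℝ} (hm : Monotone ψ)
    (hd : DifferentiableAt ℝ ψ x) : 0 ≤ deriv ψ x := by
  have h := hasDerivAt_iff_tendsto_slope.1 hd.hasDerivAt
  have h2 : Tendsto (slope ψ x) (𝓝[>] x) (𝓝 (deriv ψ x)) :=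
    h.mono_left (nhdsWithin_mono x fun y hy => ne_of_gt hy)
  refine ge_of_tendsto h2 ?_
  filter_upwards [self_mem_nhdsWithin] with y hy
  have hxy : x < y := hy
  rw [slope_def_field]
  exact div_nonneg (by linarith [hm hxy.le]) (by linarith)

lemma integrand_cont (hΦcont : Continuous Φ) {γ : ℝ → EuclideanSpace ℝ (Fin h)}
    (hγ : ContDiff ℝ 1 γ) :
    Continuous fun t => Real.sqrt (2 * Φ (γ t)) * ‖deriv γ t‖ := by
  have h1 : Continuous fun t => Real.sqrt (2 * Φ (γ t)) :=
    Real.continuous_sqrt.comp ((continuous_const.mul hΦcont).comp hγ.continuous)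
  exact h1.mul (hγ.continuous_deriv le_rfl).norm

lemma reparam (hΦcont : Continuous Φ) {γ : ℝ → EuclideanSpace ℝ (Fin h)} {θ : ℝ → ℝ}
    (hγ : ContDiff ℝ 1 γ) (hθ : ContDiff ℝ 1 θ) (hm : Monotone θ) (a b : ℝ) :
    ∫ s in a..b, Real.sqrt (2 * Φ (γ (θ s))) * ‖deriv (fun s => γ (θ s)) s‖
      = ∫ t in θ a..θ b, Real.sqrt (2 * Φ (γ t)) * ‖deriv γ t‖ := by
  have hθd : Differentiable ℝ θ := hθ.differentiable one_ne_zero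
  have hγd : Differentiable ℝ γ := hγ.differentiable one_ne_zero
  have key := intervalIntegral.integral_comp_smul_deriv (a := a) (b := b)
    (f := θ) (f' := deriv θ) (g := fun t => Real.sqrt (2 * Φ (γ t)) * ‖deriv γ t‖)
    (fun x _ => (hθd x).hasDerivAt) (hθ.continuous_deriv le_rfl).continuousOn
    (integrand_cont hΦcont hγ)
  rw [← key]
  apply intervalIntegral.integral_congr
  intro s _
  simp only [Function.comp]
  have hchain : HasDerivAt (fun s => γ (θ s)) (deriv θ s • deriv γ (θ s)) s :=
    (hγd (θ s)).hasDerivAt.scomp s (hθd s).hasDerivAt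
  rw [hchain.deriv, norm_smul, Real.norm_eq_abs,
    abs_of_nonneg (mono_deriv_nonneg' hm (hθd s))]
  simp only [smul_eq_mul]; ring

lemma dPhi_triangle (hΦcont : Continuous Φ) (hΦ : ∀ z, 0 ≤ Φ z)
    (a b c : EuclideanSpace ℝ (Fin h)) :
    dPhi Φ a c ≤ dPhi Φ a b + dPhi Φ b c := by
  refine le_of_forall_pos_le_add fun ε hε => ?_
  obtain ⟨r₁, hr₁mem, hr₁⟩ :=
    Real.lt_sInf_add_pos (dPhi_set_nonempty (Φ := Φ) a b) (half_pos hε)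
  obtain ⟨γ₁, hγ₁, h10, h11, rfl⟩ := hr₁mem
  obtain ⟨r₂, hr₂mem, hr₂⟩ :=
    Real.lt_sInf_add_pos (dPhi_set_nonempty (Φ := Φ) b c) (half_pos hε)
  obtain ⟨γ₂, hγ₂, h20, h21, rfl⟩ := hr₂mem
  have hψc : ContDiff ℝ 1 Real.smoothTransition := Real.smoothTransition.contDiff
  have hθ₁ : ContDiff ℝ 1 (fun s : ℝ => Real.smoothTransition (3 * s)) :=
    hψc.comp (contDiff_const.mul contDiff_id)
  have hθ₂ : ContDiff ℝ 1 (fun s : ℝ => Real.smoothTransition (3 * s - 2)) :=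
    hψc.comp ((contDiff_const.mul contDiff_id).sub contDiff_const)
  have hm₁ : Monotone (fun s : ℝ => Real.smoothTransition (3 * s)) :=
    fun x y hxy => psi_mono (by linarith : 3 * x ≤ 3 * y)
  have hm₂ : Monotone (fun s : ℝ => Real.smoothTransition (3 * s - 2)) :=
    fun x y hxy => psi_mono (by linarith : 3 * x - 2 ≤ 3 * y - 2)
  have hσ : ContDiff ℝ 1 (fun s : ℝ =>
      γ₁ (Real.smoothTransition (3 * s)) + (γ₂ (Real.smoothTransition (3 * s - 2)) - b)) :=
    (hγ₁.comp hθ₁).add ((hγ₂.comp hθ₂).sub contDiff_const)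
  set σ : ℝ → EuclideanSpace ℝ (Fin h) := fun s =>
    γ₁ (Real.smoothTransition (3 * s)) + (γ₂ (Real.smoothTransition (3 * s - 2)) - b)
    with hσdef
  have hσ0 : σ 0 = a := by
    show γ₁ (Real.smoothTransition (3 * 0)) + (γ₂ (Real.smoothTransition (3 * 0 - 2)) - b) = a
    rw [Real.smoothTransition.zero_of_nonpos (show (3:ℝ) * 0 - 2 ≤ 0 by norm_num),
      show (3:ℝ) * 0 = 0 by ring, Real.smoothTransition.zero, h10, h20]
    simp
  have hσ1 : σ 1 = c := by
    show γ₁ (Real.smoothTransition (3 * 1)) + (γ₂ (Real.smoothTransition (3 * 1 - 2)) - b) = c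
    rw [Real.smoothTransition.one_of_one_le (show (1:ℝ) ≤ 3 * 1 by norm_num),
      Real.smoothTransition.one_of_one_le (show (1:ℝ) ≤ 3 * 1 - 2 by norm_num), h11, h21]
    abel
  have hle : dPhi Φ a c ≤ ∫ t in (0:ℝ)..1, Real.sqrt (2 * Φ (σ t)) * ‖deriv σ t‖ :=
    csInf_le (dPhi_bddBelow hΦ a c) ⟨σ, hσ, hσ0, hσ1, rfl⟩
  have hintc := integrand_cont hΦcont hσ
  have hsplit : ∫ t in (0:ℝ)..1, Real.sqrt (2 * Φ (σ t)) * ‖deriv σ t‖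
      = (∫ t in (0:ℝ)..(1/2:ℝ), Real.sqrt (2 * Φ (σ t)) * ‖deriv σ t‖)
        + ∫ t in (1/2:ℝ)..1, Real.sqrt (2 * Φ (σ t)) * ‖deriv σ t‖ :=
    (intervalIntegral.integral_add_adjacent_intervals
      (hintc.intervalIntegrable _ _) (hintc.intervalIntegrable _ _)).symm
  -- first piece equals length of γ₁
  have hEq1 : EqOn (fun s => Real.sqrt (2 * Φ (σ s)) * ‖deriv σ s‖)
      (fun s => Real.sqrt (2 * Φ (γ₁ (Real.smoothTransition (3 * s))))
        * ‖deriv (fun s => γ₁ (Real.smoothTransition (3 * s))) s‖)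
      (uIcc (0:ℝ) (1/2:ℝ)) := by
    intro s hs
    rw [uIcc_of_le (by norm_num : (0:ℝ) ≤ 1/2)] at hs
    have hs' : s ≤ 1/2 := hs.2
    have hev : (fun y => γ₂ (Real.smoothTransition (3 * y - 2)) - b) =ᶠ[𝓝 s]
        (fun _ => (0 : EuclideanSpace ℝ (Fin h))) := by
      have hopen : IsOpen {y : ℝ | 3 * y - 2 < 0} :=
        isOpen_lt (by fun_prop) continuous_const
      filter_upwards [hopen.mem_nhds (show 3 * s - 2 < 0 by linarith)] with y hy
      rw [Real.smoothTransition.zero_of_nonpos (le_of_lt hy), h20, sub_self]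
    have hd1 : DifferentiableAt ℝ (fun s => γ₁ (Real.smoothTransition (3 * s))) s :=
      ((hγ₁.comp hθ₁).differentiable one_ne_zero) s
    have hd2 : DifferentiableAt ℝ
        (fun y => γ₂ (Real.smoothTransition (3 * y - 2)) - b) s :=
      (((hγ₂.comp hθ₂).sub contDiff_const).differentiable one_ne_zero) s
    have hσs : σ s = γ₁ (Real.smoothTransition (3 * s)) := by
      have := hev.self_of_nhds
      simp only at this
      rw [hσdef]
      simp only [this, add_zero]
    have hσd : deriv σ s = deriv (fun s => γ₁ (Real.smoothTransition (3 * s))) s := by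
      rw [hσdef, deriv_fun_add hd1 hd2, hev.deriv_eq, deriv_const, add_zero]
    simp only [hσs, hσd]
  have hEq2 : EqOn (fun s => Real.sqrt (2 * Φ (σ s)) * ‖deriv σ s‖)
      (fun s => Real.sqrt (2 * Φ (γ₂ (Real.smoothTransition (3 * s - 2))))
        * ‖deriv (fun s => γ₂ (Real.smoothTransition (3 * s - 2))) s‖)
      (uIcc (1/2:ℝ) 1) := by
    intro s hs
    rw [uIcc_of_le (by norm_num : (1/2:ℝ) ≤ 1)] at hs
    have hs' : 1/2 ≤ s := hs.1
    have hev : (fun y => γ₁ (Real.smoothTransition (3 * y))) =ᶠ[𝓝 s]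
        (fun _ => b) := by
      have hopen : IsOpen {y : ℝ | 1 < 3 * y} :=
        isOpen_lt continuous_const (by fun_prop)
      filter_upwards [hopen.mem_nhds (show 1 < 3 * s by linarith)] with y hy
      rw [Real.smoothTransition.one_of_one_le (le_of_lt hy), h11]
    have hd1 : DifferentiableAt ℝ (fun s => γ₁ (Real.smoothTransition (3 * s))) s :=
      ((hγ₁.comp hθ₁).differentiable one_ne_zero) s
    have hd2 : DifferentiableAt ℝ
        (fun y => γ₂ (Real.smoothTransition (3 * y - 2)) - b) s :=
      (((hγ₂.comp hθ₂).sub contDiff_const).differentiable one_ne_zero) s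
    have hσs : σ s = γ₂ (Real.smoothTransition (3 * s - 2)) := by
      have := hev.self_of_nhds
      simp only at this
      rw [hσdef]
      simp only [this]
      abel
    have hσd : deriv σ s = deriv (fun s => γ₂ (Real.smoothTransition (3 * s - 2))) s := by
      have hd2' : DifferentiableAt ℝ
          (fun y => γ₂ (Real.smoothTransition (3 * y - 2))) s :=
        ((hγ₂.comp hθ₂).differentiable one_ne_zero) s
      rw [hσdef, deriv_fun_add hd1 hd2, hev.deriv_eq, deriv_const, zero_add,
        deriv_fun_sub hd2' (differentiableAt_const b), deriv_const, sub_zero]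
    simp only [hσs, hσd]
  have hI1 : ∫ t in (0:ℝ)..(1/2:ℝ), Real.sqrt (2 * Φ (σ t)) * ‖deriv σ t‖
      = ∫ t in (0:ℝ)..1, Real.sqrt (2 * Φ (γ₁ t)) * ‖deriv γ₁ t‖ := by
    rw [intervalIntegral.integral_congr hEq1]
    have := reparam hΦcont hγ₁ hθ₁ hm₁ 0 (1/2)
    rw [this]
    congr 1
    · rw [show (3:ℝ) * 0 = 0 by ring]; exact Real.smoothTransition.zero
    · exact Real.smoothTransition.one_of_one_le (by norm_num)
  have hI2 : ∫ t in (1/2:ℝ)..1, Real.sqrt (2 * Φ (σ t)) * ‖deriv σ t‖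
      = ∫ t in (0:ℝ)..1, Real.sqrt (2 * Φ (γ₂ t)) * ‖deriv γ₂ t‖ := by
    rw [intervalIntegral.integral_congr hEq2]
    have := reparam hΦcont hγ₂ hθ₂ hm₂ (1/2) 1
    rw [this]
    congr 1
    · exact Real.smoothTransition.zero_of_nonpos (by norm_num)
    · exact Real.smoothTransition.one_of_one_le (by norm_num)
  rw [hsplit, hI1, hI2] at hle
  unfold dPhi at hle ⊢
  linarith

lemma dPhi_le_seg (hΦcont : Continuous Φ) (hΦ : ∀ z, 0 ≤ Φ z)
    {a b : EuclideanSpace ℝ (Fin h)} {C : ℝ}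
    (hC : ∀ z ∈ segment ℝ a b, Real.sqrt (2 * Φ z) ≤ C) :
    dPhi Φ a b ≤ C * ‖b - a‖ := by
  have hmem := dPhi_set_nonempty (Φ := Φ) a b
  have hle : dPhi Φ a b ≤ ∫ t in (0:ℝ)..1,
      Real.sqrt (2 * Φ (a + t • (b - a))) * ‖deriv (fun t : ℝ => a + t • (b - a)) t‖ :=
    csInf_le (dPhi_bddBelow hΦ a b)
      ⟨fun t : ℝ => a + t • (b - a), seg_contDiff a b, by simp, by simp, rfl⟩
  refine hle.trans ?_
  have : ∫ t in (0:ℝ)..1,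
      Real.sqrt (2 * Φ (a + t • (b - a))) * ‖deriv (fun t : ℝ => a + t • (b - a)) t‖
      ≤ ∫ _t in (0:ℝ)..1, C * ‖b - a‖ := by
    apply intervalIntegral.integral_mono_on (by norm_num)
    · apply Continuous.intervalIntegrable
      have : Continuous fun t : ℝ => Real.sqrt (2 * Φ (a + t • (b - a))) := by
        fun_prop
      have h2 : (fun t : ℝ => ‖deriv (fun t : ℝ => a + t • (b - a)) t‖)
          = fun _ : ℝ => ‖b - a‖ := funext fun t => by rw [seg_deriv]
      rw [show (fun t : ℝ => Real.sqrt (2 * Φ (a + t • (b - a))) * ‖deriv (fun t : ℝ => a + t • (b - a)) t‖) = fun t : ℝ => Real.sqrt (2 * Φ (a + t • (b - a))) * ‖b - a‖ from funext fun t => by rw [seg_deriv]]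
      exact this.mul continuous_const
    · exact intervalIntegrable_const
    · intro t ht
      rw [seg_deriv]
      apply mul_le_mul_of_nonneg_right _ (norm_nonneg _)
      apply hC
      rw [segment_eq_image']
      exact ⟨t, ht, rfl⟩
  simpa using this

lemma dPhi_abs_sub_le (hΦcont : Continuous Φ) (hΦ : ∀ z, 0 ≤ Φ z)
    (p : EuclideanSpace ℝ (Fin h)) {z w : EuclideanSpace ℝ (Fin h)} {C : ℝ}
    (hC : ∀ y ∈ segment ℝ z w, Real.sqrt (2 * Φ y) ≤ C) :
    |dPhi Φ p w - dPhi Φ p z| ≤ C * ‖w - z‖ := by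
  have h1 : dPhi Φ z w ≤ C * ‖w - z‖ := dPhi_le_seg hΦcont hΦ hC
  have h2 : dPhi Φ w z ≤ C * ‖z - w‖ := by
    apply dPhi_le_seg hΦcont hΦ
    intro y hy
    exact hC y (by rwa [segment_symm])
  rw [norm_sub_rev z w] at h2
  have t1 := dPhi_triangle hΦcont hΦ p z w
  have t2 := dPhi_triangle hΦcont hΦ p w z
  rw [abs_le]
  constructor <;> linarith

/-- Local Lipschitz property of `z ↦ dPhi Φ p (u z)` near a point of Ω,
with constant controlled by any `M > √(2Φ(u x))` and `K > Lip(u)`. -/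
lemma local_lip {n : ℕ} {Ω : Set (EuclideanSpace ℝ (Fin n))} (hΩ : IsOpen Ω)
    (hΦcont : Continuous Φ) (hΦ : ∀ z, 0 ≤ Φ z)
    (p : EuclideanSpace ℝ (Fin h))
    {u : EuclideanSpace ℝ (Fin n) → EuclideanSpace ℝ (Fin h)}
    (hu : ContDiffOn ℝ 1 u Ω) {x : EuclideanSpace ℝ (Fin n)} (hx : x ∈ Ω)
    {M : ℝ} (hM : Real.sqrt (2 * Φ (u x)) < M) :
    ∃ r > 0, Metric.ball x r ⊆ Ω ∧ ∃ K : NNReal,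
      LipschitzOnWith K (fun z => dPhi Φ p (u z)) (Metric.ball x r) ∧
      (∀ y ∈ Metric.ball x r, ∀ y' ∈ Metric.ball x r,
        |dPhi Φ p (u y) - dPhi Φ p (u y')| ≤ M * ‖u y - u y'‖) := by
  have hcx : ContDiffAt ℝ 1 u x := hu.contDiffAt (hΩ.mem_nhds hx)
  obtain ⟨K, t, ht, hlip⟩ := hcx.exists_lipschitzOnWith
  -- find ρ with √(2Φ) ≤ M on ball (u x) ρ
  have hcont : ContinuousAt (fun y => Real.sqrt (2 * Φ y)) (u x) :=
    (Real.continuous_sqrt.comp (continuous_const.mul hΦcont)).continuousAt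
  have hev : ∀ᶠ y in 𝓝 (u x), Real.sqrt (2 * Φ y) < M := hcont.eventually_lt_const hM
  obtain ⟨ρ, hρpos, hρ⟩ := Metric.eventually_nhds_iff_ball.1 hev
  -- find r
  have hu_cont : ContinuousAt u x := hcx.continuousAt
  have hnhds : t ∩ Ω ∩ u ⁻¹' Metric.ball (u x) ρ ∈ 𝓝 x := by
    refine Filter.inter_mem (Filter.inter_mem ht (hΩ.mem_nhds hx)) ?_
    exact hu_cont (Metric.ball_mem_nhds _ hρpos)
  obtain ⟨r, hrpos, hr⟩ := Metric.mem_nhds_iff.1 hnhds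
  refine ⟨r, hrpos, fun y hy => (hr hy).1.2, M.toNNReal * K, ?_, ?_⟩
  · -- Lipschitz
    have hbound : ∀ y ∈ Metric.ball x r, ∀ y' ∈ Metric.ball x r,
        |dPhi Φ p (u y) - dPhi Φ p (u y')| ≤ M * ‖u y - u y'‖ := by
      intro y hy y' hy'
      apply dPhi_abs_sub_le hΦcont hΦ
      intro z hz
      have hseg : segment ℝ (u y') (u y) ⊆ Metric.ball (u x) ρ :=
        (convex_ball _ _).segment_subset (hr hy').2 (hr hy).2
      exact (hρ z (hseg hz)).le
    apply LipschitzOnWith.of_dist_le_mul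
    intro y hy y' hy'
    have hMnn : (0:ℝ) ≤ M := le_trans (Real.sqrt_nonneg _) hM.le
    have := hbound y hy y' hy'
    have hu_lip : dist (u y) (u y') ≤ K * dist y y' :=
      hlip.dist_le_mul y (hr hy).1.1 y' (hr hy').1.1
    rw [Real.dist_eq]
    calc |dPhi Φ p (u y) - dPhi Φ p (u y')| ≤ M * ‖u y - u y'‖ := this
      _ = M * dist (u y) (u y') := by rw [dist_eq_norm]
      _ ≤ M * (K * dist y y') := by
          apply mul_le_mul_of_nonneg_left hu_lip hMnn
      _ = ↑(M.toNNReal * K) * dist y y' := by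
          push_cast
          rw [Real.coe_toNNReal _ hMnn]
          ring
  · intro y hy y' hy'
    apply dPhi_abs_sub_le hΦcont hΦ
    intro z hz
    have hseg : segment ℝ (u y') (u y) ⊆ Metric.ball (u x) ρ :=
      (convex_ball _ _).segment_subset (hr hy').2 (hr hy).2
    exact (hρ z (hseg hz)).le

lemma ae_diff {n : ℕ} {Ω : Set (EuclideanSpace ℝ (Fin n))} (hΩ : IsOpen Ω)
    (hΦcont : Continuous Φ) (hΦ : ∀ z, 0 ≤ Φ z)
    (p : EuclideanSpace ℝ (Fin h))
    {u : EuclideanSpace ℝ (Fin n) → EuclideanSpace ℝ (Fin h)}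
    (hu : ContDiffOn ℝ 1 u Ω) :
    ∀ᵐ x ∂(volume : Measure (EuclideanSpace ℝ (Fin n))), x ∈ Ω →
      DifferentiableAt ℝ (fun z => dPhi Φ p (u z)) x := by
  set f : EuclideanSpace ℝ (Fin n) → ℝ := fun z => dPhi Φ p (u z) with hf
  set S : Set (EuclideanSpace ℝ (Fin n)) := {x | x ∈ Ω ∧ ¬ DifferentiableAt ℝ f x} with hS
  have hSnull : volume S = 0 := by
    apply measure_null_of_locally_null
    intro x hx
    obtain ⟨r, hrpos, hrΩ, K, hlip, _⟩ :=
      local_lip hΩ hΦcont hΦ p hu hx.1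
        (lt_add_one _)
    obtain ⟨g, hg, hgeq⟩ := hlip.extend_real
    have hgdiff : ∀ᵐ y ∂(volume : Measure (EuclideanSpace ℝ (Fin n))),
        DifferentiableAt ℝ g y := hg.ae_differentiableAt
    refine ⟨S ∩ Metric.ball x r, inter_mem_nhdsWithin _ (Metric.ball_mem_nhds _ hrpos), ?_⟩
    have hsub : S ∩ Metric.ball x r ⊆ {y | ¬ DifferentiableAt ℝ g y} := by
      rintro y ⟨⟨-, hynd⟩, hy⟩
      intro hgd
      apply hynd
      have heq : f =ᶠ[𝓝 y] g :=
        Filter.eventuallyEq_of_mem (Metric.isOpen_ball.mem_nhds hy) hgeq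
      exact heq.differentiableAt_iff.2 hgd
    exact measure_mono_null hsub (ae_iff.1 hgdiff)
  filter_upwards [measure_eq_zero_iff_ae_notMem.1 hSnull] with x hx hxΩ
  by_contra hnd
  exact hx ⟨hxΩ, hnd⟩

lemma pointwise_bound {n : ℕ} {Ω : Set (EuclideanSpace ℝ (Fin n))} (hΩ : IsOpen Ω)
    (hΦcont : Continuous Φ) (hΦ : ∀ z, 0 ≤ Φ z)
    (p : EuclideanSpace ℝ (Fin h))
    {u : EuclideanSpace ℝ (Fin n) → EuclideanSpace ℝ (Fin h)}
    (hu : ContDiffOn ℝ 1 u Ω) {x : EuclideanSpace ℝ (Fin n)} (hx : x ∈ Ω)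
    (hdiff : DifferentiableAt ℝ (fun z => dPhi Φ p (u z)) x) :
    ‖fderiv ℝ (fun z => dPhi Φ p (u z)) x‖ ≤ Real.sqrt (2 * Φ (u x)) * frobJac u x := by
  set f : EuclideanSpace ℝ (Fin n) → ℝ := fun z => dPhi Φ p (u z) with hfdef
  set L := fderiv ℝ f x with hLdef
  have hux : DifferentiableAt ℝ u x :=
    (hu.contDiffAt (hΩ.mem_nhds hx)).differentiableAt one_ne_zero
  set A := fderiv ℝ u x with hAdef
  set c := Real.sqrt (2 * Φ (u x)) with hcdef
  have hc0 : 0 ≤ c := Real.sqrt_nonneg _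
  have key : ∀ v, |L v| ≤ c * ‖A v‖ := by
    intro v
    have keyε : ∀ ε > 0, |L v| ≤ (c + ε) * ‖A v‖ := by
      intro ε hε
      obtain ⟨r, hrpos, hrΩ, K, hlip, hbound⟩ :=
        local_lip hΩ hΦcont hΦ p hu hx (by linarith : c < c + ε)
      -- curves
      have hcurve : HasDerivAt (fun t : ℝ => x + t • v) v 0 := by
        simpa using ((hasDerivAt_id (0:ℝ)).smul_const v).const_add x
      have hfd : HasFDerivAt f L (x + (0:ℝ) • v) := by
        simpa using hdiff.hasFDerivAt
      have hL : HasDerivAt (fun t : ℝ => f (x + t • v)) (L v) 0 := by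
        simpa [Function.comp_def] using hfd.comp_hasDerivAt 0 hcurve
      have hAd : HasFDerivAt u A (x + (0:ℝ) • v) := by
        simpa using hux.hasFDerivAt
      have hA : HasDerivAt (fun t : ℝ => u (x + t • v)) (A v) 0 := by
        simpa [Function.comp_def] using hAd.comp_hasDerivAt 0 hcurve
      have hT1 : Tendsto (fun t => |slope (fun t : ℝ => f (x + t • v)) 0 t|)
          (𝓝[>] (0:ℝ)) (𝓝 |L v|) :=
        ((hasDerivAt_iff_tendsto_slope.1 hL).abs).mono_left
          (nhdsWithin_mono _ fun t ht => ne_of_gt ht)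
      have hT2 : Tendsto (fun t => (c + ε) * ‖slope (fun t : ℝ => u (x + t • v)) 0 t‖)
          (𝓝[>] (0:ℝ)) (𝓝 ((c + ε) * ‖A v‖)) :=
        (((hasDerivAt_iff_tendsto_slope.1 hA).norm).const_mul (c + ε)).mono_left
          (nhdsWithin_mono _ fun t ht => ne_of_gt ht)
      have hev : ∀ᶠ t in 𝓝[>] (0:ℝ),
          |slope (fun t : ℝ => f (x + t • v)) 0 t|
            ≤ (c + ε) * ‖slope (fun t : ℝ => u (x + t • v)) 0 t‖ := by
        have hball : (fun t : ℝ => x + t • v) ⁻¹' Metric.ball x r ∈ 𝓝 (0:ℝ) := by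
          have hcont : Continuous fun t : ℝ => x + t • v := by fun_prop
          have h0mem : (fun t : ℝ => x + t • v) 0 ∈ Metric.ball x r := by
            simpa using Metric.mem_ball_self (x := x) hrpos
          have hnb : Metric.ball x r ∈ 𝓝 ((fun t : ℝ => x + t • v) 0) :=
            Metric.isOpen_ball.mem_nhds h0mem
          exact (hcont.continuousAt (x := (0:ℝ))).preimage_mem_nhds hnb
        filter_upwards [nhdsWithin_le_nhds hball] with t ht
        have hx0 : x ∈ Metric.ball x r := Metric.mem_ball_self (x := x) hrpos
        have hb := hbound _ ht _ hx0
        rw [slope_def_field, slope_def_module]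
        simp only [zero_smul, add_zero, sub_zero]
        rw [div_eq_mul_inv, abs_mul, abs_inv, norm_smul, norm_inv, Real.norm_eq_abs]
        calc |f (x + t • v) - f x| * |t|⁻¹
            ≤ ((c + ε) * ‖u (x + t • v) - u x‖) * |t|⁻¹ :=
              mul_le_mul_of_nonneg_right hb (by positivity)
          _ = (c + ε) * (|t|⁻¹ * ‖u (x + t • v) - u x‖) := by ring
      exact le_of_tendsto_of_tendsto hT1 hT2 hev
    refine le_of_forall_pos_le_add fun δ hδ => ?_
    have hε : (0:ℝ) < δ / (‖A v‖ + 1) := by positivity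
    have := keyε _ hε
    have hAv : 0 ≤ ‖A v‖ := norm_nonneg _
    have h1 : δ / (‖A v‖ + 1) * ‖A v‖ ≤ δ := by
      rw [div_mul_eq_mul_div, div_le_iff₀ (by positivity)]
      nlinarith
    nlinarith
  have hAf : ‖A‖ ≤ frobJac u x := by
    rw [frobJac, ← hAdef]
    exact opNorm_le_frob A
  apply ContinuousLinearMap.opNorm_le_bound
  · have : 0 ≤ frobJac u x := Real.sqrt_nonneg _
    positivity
  · intro v
    calc ‖L v‖ = |L v| := rfl
      _ ≤ c * ‖A v‖ := key v
      _ ≤ c * (‖A‖ * ‖v‖) := by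
          apply mul_le_mul_of_nonneg_left (A.le_opNorm v) hc0
      _ ≤ c * (frobJac u x * ‖v‖) := by
          apply mul_le_mul_of_nonneg_left _ hc0
          exact mul_le_mul_of_nonneg_right hAf (norm_nonneg _)
      _ = c * frobJac u x * ‖v‖ := by ring

end auxlemmas

/-- Chain-rule bound: for `u ∈ C¹(Ω;ℝ^h)` and `φ = d_Φ(p,·)`, for a.e. `x ∈ Ω`,
`φ∘u` is differentiable at `x` and `|∇(φ∘u)(x)| ≤ √(2Φ(u(x))) |∇u(x)|`. -/
theorem stmt2 {n h : ℕ} (Ω : Set (EuclideanSpace ℝ (Fin n))) (hΩ : IsOpen Ω)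
    (Φ : EuclideanSpace ℝ (Fin h) → ℝ)
    (hΦcont : Continuous Φ) (hΦnonneg : ∀ z, 0 ≤ Φ z)
    (p : EuclideanSpace ℝ (Fin h))
    (u : EuclideanSpace ℝ (Fin n) → EuclideanSpace ℝ (Fin h))
    (hu : ContDiffOn ℝ 1 u Ω) :
    ∀ᵐ x ∂(volume : Measure (EuclideanSpace ℝ (Fin n))), x ∈ Ω →
      DifferentiableAt ℝ (fun z => dPhi Φ p (u z)) x ∧
      ‖fderiv ℝ (fun z => dPhi Φ p (u z)) x‖ ≤
        Real.sqrt (2 * Φ (u x)) * frobJac u x := by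
  filter_upwards [ae_diff hΩ hΦcont hΦnonneg p hu] with x hx hxΩ
  exact ⟨hx hxΩ, pointwise_bound hΩ hΦcont hΦnonneg p hu hxΩ (hx hxΩ)⟩
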